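/- Let A be a commutative Banach algebra with a bounded approximate identity. Then the norm closure of the set { u·T : u ∈ A, T ∈ A' } (a subset of the dual A' with the action ⟨v, u·T⟩ = ⟨uv, T⟩) equals the set { u·T : u ∈ A, T ∈ A' } itself, i.e., the module product A·A' is norm-closed. (This is an instance of Cohen's factorization theorem for the essential part of the dual module.) -/

import Mathlib

set_option maxHeartbeats 1600000
set_option synthInstance.maxHeartbeats 800000

open Metric Filter Topology

variable {A : Type*} [NormedCommRing A] [NormedAlgebra ℂ A] [CompleteSpace A]

/-- The module action of `A` on its dual: `⟨v, u·T⟩ = ⟨uv, T⟩`. -/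
noncomputable def dualAct (u : A) (T : A →L[ℂ] ℂ) : A →L[ℂ] ℂ :=
  T.comp (ContinuousLinearMap.mul ℂ A u)

section Aux

variable (A) in
/-- The representation of `A` on its dual by `piOpL u T = dualAct u T`. -/
noncomputable def piOpL : A →L[ℂ] ((A →L[ℂ] ℂ) →L[ℂ] (A →L[ℂ] ℂ)) :=
  ((ContinuousLinearMap.compL ℂ A A ℂ).flip).comp (ContinuousLinearMap.mul ℂ A)

omit [CompleteSpace A] in
lemma piOpL_apply (u : A) (T : A →L[ℂ] ℂ) : piOpL A u T = dualAct u T := rfl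

omit [CompleteSpace A] in
lemma piOpL_apply_apply (u : A) (T : A →L[ℂ] ℂ) (w : A) : piOpL A u T w = T (u * w) := rfl

omit [CompleteSpace A] in
lemma norm_piOpL_le (u : A) : ‖piOpL A u‖ ≤ ‖u‖ := by
  refine ContinuousLinearMap.opNorm_le_bound _ (norm_nonneg u) fun T => ?_
  have h : piOpL A u T = T.comp (ContinuousLinearMap.mul ℂ A u) := rfl
  rw [h, mul_comm]
  exact (ContinuousLinearMap.opNorm_comp_le _ _).trans
    (by gcongr; exact ContinuousLinearMap.opNorm_mul_apply_le ℂ A u)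

omit [CompleteSpace A] in
lemma piOpL_mul (u v : A) : piOpL A (u * v) = piOpL A u * piOpL A v := by
  ext T w
  simp only [piOpL_apply_apply, ContinuousLinearMap.mul_apply]
  congr 1
  ring

end Aux

section Abstract


section Abstract

variable {A : Type*} [NormedCommRing A] [NormedAlgebra ℂ A]
variable {X : Type*} [NormedAddCommGroup X] [NormedSpace ℂ X] [CompleteSpace X]

lemma norm_oneSub_inv_le' {R : Type*} [NormedRing R] [CompleteSpace R] (h1 : ‖(1:R)‖ ≤ 1)
    {s : R} (hs : ‖s‖ < 1) : ‖(↑(Units.oneSub s hs)⁻¹ : R)‖ ≤ (1 - ‖s‖)⁻¹ := by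
  have : (↑(Units.oneSub s hs)⁻¹ : R) = ∑' n : ℕ, s ^ n := rfl
  rw [this]
  refine tsum_of_norm_bounded (hasSum_geometric_of_lt_one (norm_nonneg s) hs) fun n => ?_
  cases n with
  | zero => simpa using h1
  | succ n => exact norm_pow_le' s n.succ_pos

lemma expand_mul (P Q : X →L[ℂ] X) (c d : ℂ) :
    (c • 1 + P) * (d • 1 + Q)
      = (c*d) • (1 : X →L[ℂ] X) + d • P + c • Q + P * Q := by
  simp only [add_mul, mul_add, smul_mul_assoc, mul_smul_comm, one_mul, mul_one, smul_add]
  module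

/-- One step of the Cohen factorization induction. -/
lemma cohenStep (π : A →L[ℂ] (X →L[ℂ] X)) (hπmul : ∀ u v : A, π (u * v) = π u * π v)
    (hπ : ∀ u : A, ‖π u‖ ≤ ‖u‖) {x : X} {t C' : ℝ} (htpos : 0 < t) (hC1 : 1 ≤ C')
    (htC : t * (C' + 1) ≤ 1/2)
    (hsel : ∀ (b : A) (ε δ : ℝ), 0 < ε → 0 < δ →
      ∃ a : A, ‖a‖ ≤ C' ∧ ‖a * b - b‖ < ε ∧ ‖π a x - x‖ < δ)
    (n : ℕ) (b : A) (U : (X →L[ℂ] X)ˣ)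
    (hU : (U : X →L[ℂ] X) = (((1-t)^n : ℝ) : ℂ) • 1 + π b) :
    ∃ p : A × (X →L[ℂ] X)ˣ,
      ((p.2 : X →L[ℂ] X) = (((1-t)^(n+1) : ℝ) : ℂ) • 1 + π p.1) ∧
      ‖p.1 - b‖ ≤ C' * (1-t)^n ∧
      ‖(↑p.2⁻¹ : X →L[ℂ] X) x - (↑U⁻¹ : X →L[ℂ] X) x‖ ≤ (1/2)^n := by
  have ht1 : t ≤ 1/2 := by nlinarith
  have ht1' : 0 ≤ 1 - t := by linarith
  set M : ℝ := ‖(↑U⁻¹ : X →L[ℂ] X)‖ with hM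
  have hM0 : 0 ≤ M := norm_nonneg _
  set ε : ℝ := 1/(8*(M+1)) with hε
  set δ : ℝ := (1/2)^n/(4*(M+1)^2) with hδ
  have hε0 : 0 < ε := by rw [hε]; positivity
  have hδ0 : 0 < δ := by rw [hδ]; positivity
  obtain ⟨a, haC, hab, hax⟩ := hsel b ε δ hε0 hδ0
  -- the unit h = (1-t)•1 + t•π a
  set h : X →L[ℂ] X := ((1 - t : ℝ) : ℂ) • (1 : X →L[ℂ] X) + ((t : ℝ) : ℂ) • π a with hh
  have hs0 : (1 : X →L[ℂ] X) - h = ((t:ℝ):ℂ) • ((1 : X →L[ℂ] X) - π a) := by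
    rw [hh]; push_cast; module
  have hone : ‖(1 : X →L[ℂ] X)‖ ≤ 1 := ContinuousLinearMap.norm_id_le
  have hs0norm : ‖(1 : X →L[ℂ] X) - h‖ ≤ 1/2 := by
    rw [hs0, norm_smul ((t:ℝ):ℂ) ((1 : X →L[ℂ] X) - π a), Complex.norm_real,
      Real.norm_eq_abs, abs_of_pos htpos]
    calc t * ‖(1 : X →L[ℂ] X) - π a‖ ≤ t * (1 + C') := by
          refine mul_le_mul_of_nonneg_left ?_ htpos.le
          refine (norm_sub_le _ _).trans ?_
          exact add_le_add hone ((hπ a).trans haC)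
      _ ≤ 1/2 := by nlinarith
  have hs0lt : ‖(1 : X →L[ℂ] X) - h‖ < 1 := lt_of_le_of_lt hs0norm (by norm_num)
  set Uh : (X →L[ℂ] X)ˣ := Units.oneSub ((1 : X →L[ℂ] X) - h) hs0lt with hUh
  have hUhval : (↑Uh : X →L[ℂ] X) = h := by
    rw [hUh, Units.val_oneSub, sub_sub_cancel 1 h]
  have hUhinv : ‖(↑Uh⁻¹ : X →L[ℂ] X)‖ ≤ 2 := by
    refine (norm_oneSub_inv_le' hone hs0lt).trans ?_
    rw [show (2:ℝ) = (1/2)⁻¹ by norm_num]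
    exact inv_anti₀ (by norm_num) (by linarith)
  set b' : A := b + ((t*(1-t)^n : ℝ) : ℂ) • a with hb'
  set R : X →L[ℂ] X := ((t:ℝ):ℂ) • (π b - π (a*b)) with hR
  have hRnorm : ‖R‖ ≤ t * ε := by
    rw [hR, norm_smul ((t:ℝ):ℂ) (π b - π (a*b)), Complex.norm_real,
      Real.norm_eq_abs, abs_of_pos htpos]
    refine mul_le_mul_of_nonneg_left ?_ htpos.le
    calc ‖π b - π (a*b)‖ = ‖π (b - a*b)‖ := by rw [map_sub π b (a*b)]
      _ ≤ ‖b - a*b‖ := hπ _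
      _ = ‖a*b - b‖ := norm_sub_rev _ _
      _ ≤ ε := hab.le
  have hmulab : ((t:ℝ):ℂ) • π a * π b = ((t:ℝ):ℂ) • π (a * b) := by
    rw [smul_mul_assoc ((t:ℝ):ℂ) (π a) (π b), ← hπmul a b]
  have hFR : (((1-t)^(n+1) : ℝ):ℂ) • (1 : X →L[ℂ] X) + π b' = (↑Uh) * (↑U) + R := by
    rw [hUhval, hU, hh, hR, hb', map_add π b (((t*(1-t)^n : ℝ) : ℂ) • a),
      map_smul π ((t*(1-t)^n : ℝ) : ℂ) a,
      expand_mul (((t : ℝ) : ℂ) • π a) (π b) (((1 - t : ℝ) : ℂ)) (((1-t)^n : ℝ) : ℂ), hmulab]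
    push_cast
    module
  set s : X →L[ℂ] X := (↑(Uh * U)⁻¹ : X →L[ℂ] X) * R with hs
  have hsval : (↑(Uh * U)⁻¹ : X →L[ℂ] X) = (↑U⁻¹ : X →L[ℂ] X) * (↑Uh⁻¹ : X →L[ℂ] X) := by
    rw [mul_inv_rev, Units.val_mul]
  have hsnorm : ‖s‖ ≤ 1/2 := by
    have h1 : ‖s‖ ≤ M * 2 * (t * ε) := by
      rw [hs, hsval]
      calc ‖(↑U⁻¹ : X →L[ℂ] X) * (↑Uh⁻¹ : X →L[ℂ] X) * R‖
          ≤ ‖(↑U⁻¹ : X →L[ℂ] X) * (↑Uh⁻¹ : X →L[ℂ] X)‖ * ‖R‖ := norm_mul_le _ _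
        _ ≤ (M * 2) * (t * ε) := by
            refine mul_le_mul ((norm_mul_le _ _).trans ?_) hRnorm
              (norm_nonneg R) (by positivity)
            exact mul_le_mul le_rfl hUhinv (norm_nonneg (↑Uh⁻¹ : X →L[ℂ] X)) hM0
    refine h1.trans ?_
    have hMq : (M+1) * (1/(8*(M+1))) = 1/8 := by
      field_simp
    have hMt : M * t ≤ (M+1) * (1/2) := mul_le_mul (by linarith) ht1 htpos.le (by linarith)
    calc M * 2 * (t * ε) = (M * t) * (2 * ε) := by ring
      _ ≤ ((M+1) * (1/2)) * (2 * ε) := mul_le_mul_of_nonneg_right hMt (by positivity)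
      _ = (M+1) * ε := by ring
      _ = 1/8 := by rw [hε]; exact hMq
      _ ≤ 1/2 := by norm_num
  have hsnorm' : ‖-s‖ < 1 := by rw [norm_neg s]; linarith
  set Us : (X →L[ℂ] X)ˣ := Units.oneSub (-s) hsnorm' with hUs
  have hUsval : (↑Us : X →L[ℂ] X) = 1 + s := by
    rw [hUs, Units.val_oneSub, sub_neg_eq_add 1 s]
  have hUsinv : ‖(↑Us⁻¹ : X →L[ℂ] X)‖ ≤ 2 := by
    refine (norm_oneSub_inv_le' hone hsnorm').trans ?_
    rw [show (2:ℝ) = (1/2)⁻¹ by norm_num, norm_neg s]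
    exact inv_anti₀ (by norm_num) (by linarith)
  set U' : (X →L[ℂ] X)ˣ := Uh * U * Us with hU'
  have hU'val : (↑U' : X →L[ℂ] X) = (((1-t)^(n+1) : ℝ):ℂ) • (1 : X →L[ℂ] X) + π b' := by
    rw [hFR, hU', Units.val_mul, Units.val_mul, hUsval, mul_add, mul_one]
    congr 1
    rw [hs, ← Units.val_mul Uh U, ← mul_assoc, Units.mul_inv (Uh * U), one_mul]
  have hU'inv : ‖(↑U'⁻¹ : X →L[ℂ] X)‖ ≤ 4 * (M + 1) := by
    have hrw : (↑U'⁻¹ : X →L[ℂ] X)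
        = (↑Us⁻¹ : X →L[ℂ] X) * ((↑U⁻¹ : X →L[ℂ] X) * (↑Uh⁻¹ : X →L[ℂ] X)) := by
      rw [hU', mul_inv_rev, Units.val_mul, hsval]
    rw [hrw]
    calc ‖(↑Us⁻¹ : X →L[ℂ] X) * ((↑U⁻¹ : X →L[ℂ] X) * (↑Uh⁻¹ : X →L[ℂ] X))‖
        ≤ ‖(↑Us⁻¹ : X →L[ℂ] X)‖ * (‖(↑U⁻¹ : X →L[ℂ] X)‖ * ‖(↑Uh⁻¹ : X →L[ℂ] X)‖) := by
          refine (norm_mul_le _ _).trans ?_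
          refine mul_le_mul_of_nonneg_left (norm_mul_le _ _)
            (norm_nonneg (↑Us⁻¹ : X →L[ℂ] X))
      _ ≤ 2 * (M * 2) := by
          refine mul_le_mul hUsinv ?_
            (mul_nonneg (norm_nonneg (↑U⁻¹ : X →L[ℂ] X)) (norm_nonneg (↑Uh⁻¹ : X →L[ℂ] X)))
            (by norm_num)
          exact mul_le_mul le_rfl hUhinv (norm_nonneg (↑Uh⁻¹ : X →L[ℂ] X)) hM0
      _ ≤ 4 * (M + 1) := by nlinarith
  refine ⟨(b', U'), hU'val, ?_, ?_⟩
  · have hbb : b' - b = ((t*(1-t)^n : ℝ) : ℂ) • a := by rw [hb']; abel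
    rw [hbb, norm_smul ((t*(1-t)^n : ℝ) : ℂ) a, Complex.norm_real,
      Real.norm_eq_abs, abs_of_nonneg (by positivity)]
    calc t * (1-t)^n * ‖a‖ ≤ 1 * (1-t)^n * C' := by
          refine mul_le_mul (mul_le_mul (by linarith) le_rfl (by positivity) (by norm_num))
            haC (norm_nonneg a) (by positivity)
      _ = C' * (1-t)^n := by ring
  · -- the z-difference bound
    have hdiff : (↑U'⁻¹ : X →L[ℂ] X) - (↑U⁻¹ : X →L[ℂ] X)
        = (↑U'⁻¹ : X →L[ℂ] X) * ((↑U : X →L[ℂ] X) - ↑U') * ↑U⁻¹ := by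
      rw [mul_sub (↑U'⁻¹ : X →L[ℂ] X) (↑U : X →L[ℂ] X) (↑U' : X →L[ℂ] X),
        sub_mul ((↑U'⁻¹ : X →L[ℂ] X) * (↑U : X →L[ℂ] X))
          ((↑U'⁻¹ : X →L[ℂ] X) * (↑U' : X →L[ℂ] X)) (↑U⁻¹ : X →L[ℂ] X),
        mul_assoc (↑U'⁻¹ : X →L[ℂ] X) (↑U : X →L[ℂ] X) (↑U⁻¹ : X →L[ℂ] X),
        Units.mul_inv U, mul_one, Units.inv_mul U', one_mul]
    have hUU' : (↑U : X →L[ℂ] X) - ↑U'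
        = (((t:ℝ):ℂ) * (((1-t)^n : ℝ):ℂ)) • ((1 : X →L[ℂ] X) - π a) := by
      rw [hU, hU'val, hb', map_add π b (((t*(1-t)^n : ℝ) : ℂ) • a),
        map_smul π ((t*(1-t)^n : ℝ) : ℂ) a]
      push_cast
      module
    have hcommab : Commute (π a) (π b) := by
      unfold Commute SemiconjBy
      rw [← hπmul a b, ← hπmul b a, mul_comm a b]
    have hcomm : Commute ((1 : X →L[ℂ] X) - π a) (↑U⁻¹ : X →L[ℂ] X) := by
      refine Commute.units_inv_right ?_
      rw [hU]
      exact Commute.sub_left (Commute.one_left _)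
        (Commute.add_right ((Commute.one_right _).smul_right _) hcommab)
    have key : (↑U'⁻¹ : X →L[ℂ] X) x - (↑U⁻¹ : X →L[ℂ] X) x
        = (((t:ℝ):ℂ) * (((1-t)^n : ℝ):ℂ))
          • ((↑U'⁻¹ : X →L[ℂ] X) ((↑U⁻¹ : X →L[ℂ] X) (x - π a x))) := by
      have e1 : (↑U'⁻¹ : X →L[ℂ] X) x - (↑U⁻¹ : X →L[ℂ] X) x
          = ((↑U'⁻¹ : X →L[ℂ] X) - (↑U⁻¹ : X →L[ℂ] X)) x := by
        rw [ContinuousLinearMap.sub_apply]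
      have e2 : (↑U'⁻¹ : X →L[ℂ] X) * ((↑U : X →L[ℂ] X) - ↑U') * (↑U⁻¹ : X →L[ℂ] X)
          = (((t:ℝ):ℂ) * (((1-t)^n : ℝ):ℂ))
            • ((↑U'⁻¹ : X →L[ℂ] X) * ((↑U⁻¹ : X →L[ℂ] X) * ((1 : X →L[ℂ] X) - π a))) := by
        rw [hUU', mul_smul_comm, smul_mul_assoc,
          mul_assoc (↑U'⁻¹ : X →L[ℂ] X) ((1 : X →L[ℂ] X) - π a) (↑U⁻¹ : X →L[ℂ] X),
          hcomm.eq]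
      rw [e1, hdiff, e2, ContinuousLinearMap.smul_apply, ContinuousLinearMap.mul_apply,
        ContinuousLinearMap.mul_apply]
      simp only [ContinuousLinearMap.sub_apply, ContinuousLinearMap.one_apply]
    rw [key, norm_smul (((t:ℝ):ℂ) * (((1-t)^n : ℝ):ℂ))
      ((↑U'⁻¹ : X →L[ℂ] X) ((↑U⁻¹ : X →L[ℂ] X) (x - π a x)))]
    have hcoef : ‖((t:ℝ):ℂ) * (((1-t)^n : ℝ):ℂ)‖ ≤ 1 := by
      rw [norm_mul, Complex.norm_real, Complex.norm_real, Real.norm_eq_abs, Real.norm_eq_abs,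
        abs_of_pos htpos, abs_of_nonneg (by positivity)]
      calc t * (1-t)^n ≤ 1 * 1 := by
            refine mul_le_mul (by linarith) (pow_le_one₀ ht1' (by linarith)) (by positivity)
              (by norm_num)
        _ = 1 := by norm_num
    have hval : ‖(↑U'⁻¹ : X →L[ℂ] X) ((↑U⁻¹ : X →L[ℂ] X) (x - π a x))‖
        ≤ (4*(M+1)) * (M * δ) := by
      calc ‖(↑U'⁻¹ : X →L[ℂ] X) ((↑U⁻¹ : X →L[ℂ] X) (x - π a x))‖
          ≤ ‖(↑U'⁻¹ : X →L[ℂ] X)‖ * ‖(↑U⁻¹ : X →L[ℂ] X) (x - π a x)‖ :=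
            ContinuousLinearMap.le_opNorm _ _
        _ ≤ (4*(M+1)) * (M * δ) := by
            refine mul_le_mul hU'inv ?_ (norm_nonneg _) (by positivity)
            calc ‖(↑U⁻¹ : X →L[ℂ] X) (x - π a x)‖ ≤ M * ‖x - π a x‖ :=
                ContinuousLinearMap.le_opNorm _ _
              _ ≤ M * δ := by
                  refine mul_le_mul_of_nonneg_left ?_ hM0
                  rw [norm_sub_rev]; exact hax.le
    calc ‖((t:ℝ):ℂ) * (((1-t)^n : ℝ):ℂ)‖
          * ‖(↑U'⁻¹ : X →L[ℂ] X) ((↑U⁻¹ : X →L[ℂ] X) (x - π a x))‖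
        ≤ 1 * ((4*(M+1)) * (M * δ)) :=
          mul_le_mul hcoef hval (norm_nonneg _) (by norm_num)
      _ ≤ (1/2)^n := by
          have hδq : (4*(M+1)^2) * ((1/2:ℝ)^n/(4*(M+1)^2)) = (1/2:ℝ)^n := by
            field_simp
          calc 1 * ((4*(M+1)) * (M * δ)) = (4*(M+1)) * (M * δ) := by ring
            _ ≤ (4*(M+1)) * ((M+1) * δ) :=
                mul_le_mul_of_nonneg_left
                  (mul_le_mul_of_nonneg_right (by linarith) hδ0.le) (by positivity)
            _ = (4*(M+1)^2) * δ := by ring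
            _ = (1/2)^n := by rw [hδ]; exact hδq


variable [CompleteSpace A]

/-- Abstract Cohen factorization. -/
lemma cohen_abstract (π : A →L[ℂ] (X →L[ℂ] X))
    (hπmul : ∀ u v : A, π (u * v) = π u * π v)
    (hπ : ∀ u : A, ‖π u‖ ≤ ‖u‖) {x : X} {t C' : ℝ} (htpos : 0 < t) (hC1 : 1 ≤ C')
    (htC : t * (C' + 1) ≤ 1/2)
    (hsel : ∀ (b : A) (ε δ : ℝ), 0 < ε → 0 < δ →
      ∃ a : A, ‖a‖ ≤ C' ∧ ‖a * b - b‖ < ε ∧ ‖π a x - x‖ < δ) :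
    ∃ (b : A) (y : X), x = π b y := by
  have ht1 : t ≤ 1/2 := by nlinarith
  classical
  have hkey : ∀ (n : ℕ)
      (p : {q : A × (X →L[ℂ] X)ˣ //
        (↑q.2 : X →L[ℂ] X) = (((1-t)^n : ℝ):ℂ) • 1 + π q.1}),
      ∃ q : A × (X →L[ℂ] X)ˣ,
        ((q.2 : X →L[ℂ] X) = (((1-t)^(n+1) : ℝ) : ℂ) • 1 + π q.1) ∧
        ‖q.1 - p.1.1‖ ≤ C' * (1-t)^n ∧
        ‖(↑q.2⁻¹ : X →L[ℂ] X) x - (↑p.1.2⁻¹ : X →L[ℂ] X) x‖ ≤ (1/2)^n :=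
    fun n p => cohenStep π hπmul hπ htpos hC1 htC hsel n p.1.1 p.1.2 p.2
  choose F hF1 hF2 hF3 using hkey
  let g : ∀ n : ℕ, {q : A × (X →L[ℂ] X)ˣ //
      (↑q.2 : X →L[ℂ] X) = (((1-t)^n : ℝ):ℂ) • 1 + π q.1} :=
    fun n => Nat.rec ⟨((0 : A), 1), by simp⟩ (fun m ih => ⟨F m ih, hF1 m ih⟩) n
  set b : ℕ → A := fun n => (g n).1.1 with hbdef
  set z : ℕ → X := fun n => (↑(g n).1.2⁻¹ : X →L[ℂ] X) x with hzdef
  have hbstep : ∀ n, ‖b (n+1) - b n‖ ≤ C' * (1-t)^n := fun n => hF2 n (g n)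
  have hzstep : ∀ n, ‖z (n+1) - z n‖ ≤ (1/2)^n := fun n => hF3 n (g n)
  have hcb : CauchySeq b := by
    refine cauchySeq_of_le_geometric (1-t) C' (by linarith) fun n => ?_
    rw [dist_eq_norm, norm_sub_rev]
    exact hbstep n
  have hcz : CauchySeq z := by
    refine cauchySeq_of_le_geometric (1/2) 1 (by norm_num) fun n => ?_
    rw [dist_eq_norm, norm_sub_rev, one_mul]
    exact hzstep n
  obtain ⟨bb, hbb⟩ := cauchySeq_tendsto_of_complete hcb
  obtain ⟨y, hy⟩ := cauchySeq_tendsto_of_complete hcz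
  have happ : ∀ n, (((1-t)^n : ℝ):ℂ) • z n + π (b n) (z n) = x := by
    intro n
    have h1 : (↑(g n).1.2 : X →L[ℂ] X) ((↑(g n).1.2⁻¹ : X →L[ℂ] X) x) = x := by
      rw [← ContinuousLinearMap.mul_apply, Units.mul_inv, ContinuousLinearMap.one_apply]
    rw [(g n).2] at h1
    simp only [ContinuousLinearMap.add_apply, ContinuousLinearMap.smul_apply,
      ContinuousLinearMap.one_apply] at h1
    exact h1
  have hA1 : Tendsto (fun n => (((1-t)^n : ℝ):ℂ) • z n) atTop (𝓝 (0 : X)) := by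
    have h0 : Tendsto (fun n : ℕ => ((1-t)^n : ℝ)) atTop (𝓝 0) :=
      tendsto_pow_atTop_nhds_zero_of_lt_one (by linarith) (by linarith)
    have h0' : Tendsto (fun n : ℕ => (((1-t)^n : ℝ):ℂ)) atTop (𝓝 0) := by
      have h := (Complex.continuous_ofReal.tendsto 0).comp h0
      rw [Complex.ofReal_zero] at h
      exact h
    have := h0'.smul hy
    simpa using this
  have hA2 : Tendsto (fun n => π (b n) (z n)) atTop (𝓝 (π bb y)) := by
    have hπb : Tendsto (fun n => π (b n)) atTop (𝓝 (π bb)) :=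
      (π.continuous.tendsto bb).comp hbb
    have hp : Tendsto (fun n => (π (b n), z n)) atTop (𝓝 (π bb, y)) := hπb.prodMk_nhds hy
    exact (isBoundedBilinearMap_apply.continuous.tendsto (π bb, y)).comp hp
  have hfin : Tendsto (fun n => (((1-t)^n : ℝ):ℂ) • z n + π (b n) (z n)) atTop
      (𝓝 (0 + π bb y)) := hA1.add hA2
  refine ⟨bb, y, ?_⟩
  have hconst : Tendsto (fun n : ℕ => (((1-t)^n : ℝ):ℂ) • z n + π (b n) (z n)) atTop (𝓝 x) := by
    have : (fun n : ℕ => (((1-t)^n : ℝ):ℂ) • z n + π (b n) (z n)) = fun _ => x :=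
      funext happ
    rw [this]
    exact tendsto_const_nhds
  have := tendsto_nhds_unique hconst hfin
  simpa using this


end Abstract

/-- Cohen factorization for the dual module: if `A` has a bounded approximate
identity, then the module product `A·A'` is norm closed in `A'`. -/
theorem dual_module_product_closed
    {ι : Type*} (l : Filter ι) [l.NeBot] (e : ι → A) (C : ℝ)
    (hbd : ∀ i, ‖e i‖ ≤ C)
    (hai : ∀ v : A, Tendsto (fun i => ‖e i * v - v‖) l (𝓝 (0 : ℝ))) :
    closure {S : A →L[ℂ] ℂ | ∃ (u : A) (T : A →L[ℂ] ℂ), S = dualAct u T} =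
      {S : A →L[ℂ] ℂ | ∃ (u : A) (T : A →L[ℂ] ℂ), S = dualAct u T} := by
  refine Set.Subset.antisymm ?_ subset_closure
  intro x hx
  set C' : ℝ := max C 1 with hC'
  have hC1 : 1 ≤ C' := le_max_right _ _
  have hC0 : 0 < C' := lt_of_lt_of_le one_pos hC1
  set t : ℝ := 1/(2*(C'+1)) with ht
  have htpos : 0 < t := by rw [ht]; positivity
  have htC : t * (C'+1) ≤ 1/2 := by
    have h : t * (C'+1) = 1/2 := by
      rw [ht]
      field_simp
    exact le_of_eq h
  -- the approximate identity acts as identity in the limit on `x`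
  have hPx : Tendsto (fun i => ‖piOpL A (e i) x - x‖) l (𝓝 0) := by
    rw [Metric.tendsto_nhds]
    intro ε hε
    have hr : 0 < ε/(2*(C'+1)) := by positivity
    obtain ⟨w, hwS, hwx⟩ := Metric.mem_closure_iff.mp hx _ hr
    obtain ⟨u, T, hw⟩ := hwS
    have hw0 : Tendsto (fun i => ‖piOpL A (e i) w - w‖) l (𝓝 0) := by
      have heq : ∀ i, piOpL A (e i) w - w = piOpL A (e i * u - u) T := by
        intro i
        rw [hw]
        have h1 : piOpL A (e i) (dualAct u T) = piOpL A (e i * u) T := by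
          rw [← piOpL_apply u T, ← ContinuousLinearMap.mul_apply, ← piOpL_mul]
        rw [h1, ← piOpL_apply u T, ← (ContinuousLinearMap.sub_apply (piOpL A (e i * u)) (piOpL A u) T :
          (piOpL A (e i * u) - piOpL A u) T = piOpL A (e i * u) T - piOpL A u T), ← map_sub (piOpL A) (e i * u) u]
      have hbound : ∀ i, ‖piOpL A (e i) w - w‖ ≤ ‖e i * u - u‖ * ‖T‖ := by
        intro i
        rw [heq i]
        exact (ContinuousLinearMap.le_opNorm _ _).trans
          (mul_le_mul_of_nonneg_right (norm_piOpL_le _) (norm_nonneg T))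
      have hlim : Tendsto (fun i => ‖e i * u - u‖ * ‖T‖) l (𝓝 0) := by
        have := (hai u).mul_const ‖T‖
        simpa using this
      exact squeeze_zero (fun i => norm_nonneg _) hbound hlim
    filter_upwards [hw0.eventually (gt_mem_nhds (half_pos hε))] with i hi
    rw [Real.dist_eq, sub_zero, abs_norm]
    have hxw : ‖x - w‖ < ε/(2*(C'+1)) := by rw [← dist_eq_norm]; exact hwx
    have hdecomp : piOpL A (e i) x - x
        = piOpL A (e i) (x - w) + (piOpL A (e i) w - w) + (w - x) := by
      rw [map_sub (piOpL A (e i)) x w]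
      abel
    have h1 : ‖piOpL A (e i) x - x‖
        ≤ C' * ‖x - w‖ + ‖piOpL A (e i) w - w‖ + ‖x - w‖ := by
      rw [hdecomp]
      refine (norm_add₃_le).trans ?_
      have e1 : ‖piOpL A (e i) (x - w)‖ ≤ C' * ‖x - w‖ := by
        refine (ContinuousLinearMap.le_opNorm _ _).trans ?_
        refine mul_le_mul_of_nonneg_right ((norm_piOpL_le _).trans ?_) (norm_nonneg _)
        exact le_trans (hbd i) (le_max_left C 1)
      have e2 : ‖w - x‖ = ‖x - w‖ := norm_sub_rev _ _
      rw [e2]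
      gcongr
    have hhalf : (C'+1) * (ε/(2*(C'+1))) = ε/2 := by
      field_simp
    nlinarith [norm_nonneg (x - w), hC0]
  -- selection of good approximate-identity elements
  have hsel : ∀ (b : A) (ε δ : ℝ), 0 < ε → 0 < δ →
      ∃ a : A, ‖a‖ ≤ C' ∧ ‖a * b - b‖ < ε ∧ ‖piOpL A a x - x‖ < δ := by
    intro b ε δ hε hδ
    have h1 : ∀ᶠ i in l, ‖e i * b - b‖ < ε := (hai b).eventually (gt_mem_nhds hε)
    have h2 : ∀ᶠ i in l, ‖piOpL A (e i) x - x‖ < δ := hPx.eventually (gt_mem_nhds hδ)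
    obtain ⟨i, hi1, hi2⟩ := (h1.and h2).exists
    exact ⟨e i, le_trans (hbd i) (le_max_left C 1), hi1, hi2⟩
  obtain ⟨bb, y, hxy⟩ := cohen_abstract (piOpL A) (piOpL_mul) (norm_piOpL_le) htpos hC1 htC hsel
  exact ⟨bb, y, hxy⟩
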